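/- Let $J \subseteq \mathbb{R}$ be an interval and let $\{X_n(\beta)\}_{n \ge 1, \beta \in J}$ and $\{X(\beta)\}_{\beta \in J}$ be families of nonnegative integrable random variables on a probability space. Assume: (1) for each $n$, the family $\{X_n(\beta)\}_{\beta \in J}$ is uniformly integrable; (2) $\{X(\beta)\}_{\beta \in J}$ is uniformly integrable; (3) for every $\varepsilon > 0$, $\lim_{n\to\infty} \sup_{\beta \in J} \mathbb{P}(|X_n(\beta) - X(\beta)| > \varepsilon) = 0$. Then $\lim_{n\to\infty} \sup_{\beta \in J} |\mathbb{E}(X_n(\beta)) - \mathbb{E}(X(\beta))| = 0$ if and only if the doubly-indexed family $\{X_n(\beta)\}_{n \ge 1, \beta \in J}$ is uniformly integrable. -/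

import Mathlib

open MeasureTheory

section Aux

variable {Ω : Type*} [MeasurableSpace Ω] (P : Measure Ω)

noncomputable def tailI (Z : Ω → ℝ) (M : ℝ) : ℝ :=
  ∫ ω, Set.indicator {ω | M < |Z ω|} (fun ω => |Z ω|) ω ∂P

lemma tailI_int {Z : Ω → ℝ} (hm : Measurable Z) (hi : Integrable Z P) (M : ℝ) :
    Integrable (fun ω => Set.indicator {ω | M < |Z ω|} (fun ω => |Z ω|) ω) P := by
  have hs : MeasurableSet {ω | M < |Z ω|} := measurableSet_lt measurable_const hm.abs
  exact hi.abs.indicator hs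

lemma tailI_mono {Z : Ω → ℝ} (hm : Measurable Z) (hi : Integrable Z P)
    {M M' : ℝ} (h : M ≤ M') : tailI P Z M' ≤ tailI P Z M := by
  refine integral_mono_of_nonneg (Filter.Eventually.of_forall fun ω =>
    Set.indicator_nonneg (fun x _ => abs_nonneg _) ω) (tailI_int P hm hi M)
    (Filter.Eventually.of_forall fun ω => ?_)
  exact Set.indicator_le_indicator_of_subset
    (fun x hx => lt_of_le_of_lt h hx) (fun x => abs_nonneg _) ω

variable [IsProbabilityMeasure P]

lemma key1 {f g : Ω → ℝ}
    (hfm : Measurable f) (hgm : Measurable g)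
    (hfi : Integrable f P) (hgi : Integrable g P)
    (ε M : ℝ) (hε : 0 < ε) (hM : 0 < M) :
    |∫ ω, f ω ∂P - ∫ ω, g ω ∂P| ≤
      ε + tailI P f M + tailI P g M + 2 * M * (P {ω | ε < |f ω - g ω|}).toReal := by
  have hAm : MeasurableSet {ω | ε < |f ω - g ω|} :=
    measurableSet_lt measurable_const (hfm.sub hgm).abs
  have hstep1 : |∫ ω, f ω ∂P - ∫ ω, g ω ∂P| ≤ ∫ ω, |f ω - g ω| ∂P := by
    rw [← integral_sub hfi hgi]
    simpa [Real.norm_eq_abs] using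
      norm_integral_le_integral_norm (μ := P) (fun ω => f ω - g ω)
  have hIf := tailI_int P hfm hfi M
  have hIg := tailI_int P hgm hgi M
  have hIA : Integrable (fun ω => Set.indicator {ω | ε < |f ω - g ω|} (fun _ => 2 * M) ω) P :=
    (integrable_const (2 * M)).indicator hAm
  have hI1 : Integrable (fun ω => ε + Set.indicator {ω | M < |f ω|} (fun ω => |f ω|) ω) P :=
    (integrable_const ε).add hIf
  have hI2 : Integrable (fun ω => ε + Set.indicator {ω | M < |f ω|} (fun ω => |f ω|) ω
      + Set.indicator {ω | M < |g ω|} (fun ω => |g ω|) ω) P := hI1.add hIg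
  have hrhs : Integrable (fun ω => ε + Set.indicator {ω | M < |f ω|} (fun ω => |f ω|) ω
      + Set.indicator {ω | M < |g ω|} (fun ω => |g ω|) ω
      + Set.indicator {ω | ε < |f ω - g ω|} (fun _ => 2 * M) ω) P := hI2.add hIA
  have hptwise : ∀ ω, |f ω - g ω| ≤ ε + Set.indicator {ω | M < |f ω|} (fun ω => |f ω|) ω
      + Set.indicator {ω | M < |g ω|} (fun ω => |g ω|) ω
      + Set.indicator {ω | ε < |f ω - g ω|} (fun _ => 2 * M) ω := by
    intro ω
    have htri : |f ω - g ω| ≤ |f ω| + |g ω| := abs_sub _ _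
    simp only [Set.indicator_apply, Set.mem_setOf_eq]
    have hf' : |f ω| ≤ M + (if M < |f ω| then |f ω| else 0) := by
      split_ifs with h
      · linarith
      · push_neg at h; linarith
    have hg' : |g ω| ≤ M + (if M < |g ω| then |g ω| else 0) := by
      split_ifs with h
      · linarith
      · push_neg at h; linarith
    have hf0 : 0 ≤ (if M < |f ω| then |f ω| else 0) := by
      split_ifs; exacts [abs_nonneg _, le_refl 0]
    have hg0 : 0 ≤ (if M < |g ω| then |g ω| else 0) := by
      split_ifs; exacts [abs_nonneg _, le_refl 0]
    by_cases hAω : ε < |f ω - g ω|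
    · rw [if_pos hAω]; linarith
    · rw [if_neg hAω]; push_neg at hAω; linarith
  have hstep2 := integral_mono (hfi.sub hgi).abs hrhs hptwise
  have hcalc : ∫ ω, (ε + Set.indicator {ω | M < |f ω|} (fun ω => |f ω|) ω
      + Set.indicator {ω | M < |g ω|} (fun ω => |g ω|) ω
      + Set.indicator {ω | ε < |f ω - g ω|} (fun _ => 2 * M) ω) ∂P
      = ε + tailI P f M + tailI P g M + 2 * M * (P {ω | ε < |f ω - g ω|}).toReal := by
    rw [integral_add hI2 hIA, integral_add hI1 hIg, integral_add (integrable_const ε) hIf,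
        integral_const, integral_indicator_const _ hAm]
    simp only [tailI, smul_eq_mul, measureReal_def, measure_univ, ENNReal.toReal_one, one_smul]
    ring
  calc |∫ ω, f ω ∂P - ∫ ω, g ω ∂P| ≤ ∫ ω, |f ω - g ω| ∂P := hstep1
    _ ≤ _ := hstep2
    _ = _ := hcalc

lemma key2 {f g : Ω → ℝ}
    (hfm : Measurable f) (hgm : Measurable g)
    (hfi : Integrable f P) (hgi : Integrable g P)
    (hf0 : ∀ ω, 0 ≤ f ω) (hg0 : ∀ ω, 0 ≤ g ω)
    (ε c : ℝ) (hε : 0 < ε) (hc : 0 < c) :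
    tailI P f (2 * c) ≤ 2 * ((∫ ω, f ω ∂P - ∫ ω, g ω ∂P) + tailI P g c + ε
      + c * (P {ω | ε < |f ω - g ω|}).toReal) := by
  have hAm : MeasurableSet {ω | ε < |f ω - g ω|} :=
    measurableSet_lt measurable_const (hfm.sub hgm).abs
  have hmf : Integrable (fun ω => min (f ω) c) P := hfi.inf (integrable_const c)
  have hmg : Integrable (fun ω => min (g ω) c) P := hgi.inf (integrable_const c)
  have stepa : tailI P f (2 * c) ≤ 2 * (∫ ω, f ω ∂P - ∫ ω, min (f ω) c ∂P) := by
    have hptwise : ∀ ω, Set.indicator {ω | 2 * c < |f ω|} (fun ω => |f ω|) ω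
        ≤ 2 * (f ω - min (f ω) c) := by
      intro ω
      have h0 := hf0 ω
      have habs : |f ω| = f ω := abs_of_nonneg h0
      simp only [Set.indicator_apply, Set.mem_setOf_eq, habs]
      split_ifs with h
      · have : min (f ω) c = c := min_eq_right (by linarith)
        rw [this]; linarith
      · have : min (f ω) c ≤ f ω := min_le_left _ _
        linarith
    have h2int : Integrable (fun ω => 2 * (f ω - min (f ω) c)) P :=
      ((hfi.sub hmf).const_mul 2 : Integrable (fun ω => 2 * (f ω - min (f ω) c)) P)
    have := integral_mono (tailI_int P hfm hfi (2 * c)) h2int hptwise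
    calc tailI P f (2 * c) ≤ ∫ ω, 2 * (f ω - min (f ω) c) ∂P := this
      _ = 2 * (∫ ω, f ω ∂P - ∫ ω, min (f ω) c ∂P) := by
          rw [integral_const_mul, integral_sub hfi hmf]
  have stepc : ∫ ω, min (g ω) c ∂P - ∫ ω, min (f ω) c ∂P
      ≤ ε + c * (P {ω | ε < |f ω - g ω|}).toReal := by
    have hptwise : ∀ ω, min (g ω) c - min (f ω) c
        ≤ ε + Set.indicator {ω | ε < |f ω - g ω|} (fun _ => c) ω := by
      intro ω
      simp only [Set.indicator_apply, Set.mem_setOf_eq]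
      by_cases h : ε < |f ω - g ω|
      · rw [if_pos h]
        have h1 : min (g ω) c ≤ c := min_le_right _ _
        have h2 : 0 ≤ min (f ω) c := le_min (hf0 ω) hc.le
        linarith
      · rw [if_neg h]
        push_neg at h
        have hgle : g ω ≤ f ω + ε := by
          have := abs_le.mp h
          linarith [this.1]
        have hmin : min (g ω) c ≤ min (f ω + ε) (c + ε) :=
          min_le_min hgle (by linarith)
        have heq : min (f ω + ε) (c + ε) = min (f ω) c + ε := min_add_add_right _ _ _
        rw [heq] at hmin
        linarith
    have hsub : Integrable (fun ω => min (g ω) c - min (f ω) c) P := hmg.sub hmf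
    have hIA : Integrable (fun ω => ε + Set.indicator {ω | ε < |f ω - g ω|} (fun _ => c) ω) P :=
      (integrable_const ε).add ((integrable_const c).indicator hAm)
    have hmono := integral_mono hsub hIA hptwise
    rw [integral_sub hmg hmf] at hmono
    calc ∫ ω, min (g ω) c ∂P - ∫ ω, min (f ω) c ∂P
        ≤ ∫ ω, (ε + Set.indicator {ω | ε < |f ω - g ω|} (fun _ => c) ω) ∂P := hmono
      _ = ε + c * (P {ω | ε < |f ω - g ω|}).toReal := by
          rw [integral_add (integrable_const ε) ((integrable_const c).indicator hAm),
              integral_const, integral_indicator_const _ hAm]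
          simp only [smul_eq_mul, measureReal_def, measure_univ, ENNReal.toReal_one, one_smul]
          ring
  have stepd : ∫ ω, g ω ∂P - ∫ ω, min (g ω) c ∂P ≤ tailI P g c := by
    have hptwise : ∀ ω, g ω - min (g ω) c
        ≤ Set.indicator {ω | c < |g ω|} (fun ω => |g ω|) ω := by
      intro ω
      have h0 := hg0 ω
      have habs : |g ω| = g ω := abs_of_nonneg h0
      simp only [Set.indicator_apply, Set.mem_setOf_eq, habs]
      split_ifs with h
      · have : min (g ω) c = c := min_eq_right h.le
        rw [this]; linarith
      · push_neg at h
        have : min (g ω) c = g ω := min_eq_left h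
        rw [this]; linarith
    have hsub : Integrable (fun ω => g ω - min (g ω) c) P := hgi.sub hmg
    have hmono := integral_mono hsub (tailI_int P hgm hgi c) hptwise
    rw [integral_sub hgi hmg] at hmono
    exact hmono
  linarith

end Aux

/-- A family of random variables is uniformly integrable:
`lim_{M→∞} sup_i E(|Z_i| 1_{|Z_i| > M}) = 0`. -/
def UnifInt {Ω : Type*} [MeasurableSpace Ω] (P : Measure Ω) {I : Type*}
    (Z : I → Ω → ℝ) : Prop :=
  ∀ ε > (0 : ℝ), ∃ M : ℝ, 0 < M ∧ ∀ i : I,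
    ∫ ω, Set.indicator {ω | M < |Z i ω|} (fun ω => |Z i ω|) ω ∂P ≤ ε

theorem stmt2 {Ω : Type*} [MeasurableSpace Ω] (P : Measure Ω) [IsProbabilityMeasure P]
    (J : Set ℝ) (hJ : J.OrdConnected)
    (X : ℕ → ℝ → Ω → ℝ) (Xlim : ℝ → Ω → ℝ)
    (hXmeas : ∀ n, ∀ β ∈ J, Measurable (X n β))
    (hXlimmeas : ∀ β ∈ J, Measurable (Xlim β))
    (hXpos : ∀ n, ∀ β ∈ J, ∀ ω, 0 ≤ X n β ω)
    (hXlimpos : ∀ β ∈ J, ∀ ω, 0 ≤ Xlim β ω)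
    (hXint : ∀ n, ∀ β ∈ J, Integrable (X n β) P)
    (hXlimint : ∀ β ∈ J, Integrable (Xlim β) P)
    (h1 : ∀ n, UnifInt P (fun β : J => X n (β : ℝ)))
    (h2 : UnifInt P (fun β : J => Xlim (β : ℝ)))
    (h3 : ∀ ε > (0 : ℝ), ∀ δ > (0 : ℝ), ∃ N : ℕ, ∀ n ≥ N, ∀ β ∈ J,
      (P {ω | ε < |X n β ω - Xlim β ω|}).toReal ≤ δ) :
    (∀ δ > (0 : ℝ), ∃ N : ℕ, ∀ n ≥ N, ∀ β ∈ J,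
      |∫ ω, X n β ω ∂P - ∫ ω, Xlim β ω ∂P| ≤ δ) ↔
    UnifInt P (fun p : ℕ × J => X p.1 (p.2 : ℝ)) := by
  constructor
  · -- forward: expectation convergence ⟹ doubly-indexed UI
    intro h ε hε
    obtain ⟨c, hc, hcbd⟩ := h2 (ε / 16) (by linarith)
    obtain ⟨N₁, hN₁⟩ := h (ε / 16) (by linarith)
    obtain ⟨N₂, hN₂⟩ := h3 (ε / 16) (by linarith) (ε / (16 * c)) (by positivity)
    set N' := max N₁ N₂ with hN'
    choose Ms hMs hMsbd using fun n => h1 n ε hε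
    set M := 2 * c + ∑ n ∈ Finset.range N', Ms n with hM
    have hMpos : 0 < M := by
      have : 0 ≤ ∑ n ∈ Finset.range N', Ms n :=
        Finset.sum_nonneg fun n _ => (hMs n).le
      positivity
    refine ⟨M, hMpos, ?_⟩
    rintro ⟨n, β, hβ⟩
    show tailI P (X n β) M ≤ ε
    have hfm := hXmeas n β hβ
    have hfi := hXint n β hβ
    by_cases hn : N' ≤ n
    · -- large n: use key2
      have h2c : tailI P (X n β) M ≤ tailI P (X n β) (2 * c) := by
        refine tailI_mono P hfm hfi ?_
        have : 0 ≤ ∑ k ∈ Finset.range N', Ms k :=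
          Finset.sum_nonneg fun k _ => (hMs k).le
        linarith
      have hkey := key2 P hfm (hXlimmeas β hβ) hfi (hXlimint β hβ)
        (hXpos n β hβ) (hXlimpos β hβ) (ε / 16) c (by linarith) hc
      have hA := hN₂ n (le_trans (le_max_right _ _) hn) β hβ
      have hE : ∫ ω, X n β ω ∂P - ∫ ω, Xlim β ω ∂P ≤ ε / 16 := by
        have := hN₁ n (le_trans (le_max_left _ _) hn) β hβ
        exact (abs_le.mp this).2
      have htg : tailI P (Xlim β) c ≤ ε / 16 := hcbd ⟨β, hβ⟩
      have hPA : c * (P {ω | ε / 16 < |X n β ω - Xlim β ω|}).toReal ≤ c * (ε / (16 * c)) :=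
        mul_le_mul_of_nonneg_left hA hc.le
      have hcc : c * (ε / (16 * c)) = ε / 16 := by field_simp
      calc tailI P (X n β) M ≤ tailI P (X n β) (2 * c) := h2c
        _ ≤ 2 * ((∫ ω, X n β ω ∂P - ∫ ω, Xlim β ω ∂P) + tailI P (Xlim β) c + ε / 16
            + c * (P {ω | ε / 16 < |X n β ω - Xlim β ω|}).toReal) := hkey
        _ ≤ 2 * (ε / 16 + ε / 16 + ε / 16 + ε / 16) := by
            have := hcc ▸ hPA
            linarith
        _ ≤ ε := by linarith
    · -- small n: use row UI
      push_neg at hn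
      have hle : Ms n ≤ M := by
        have h1' : Ms n ≤ ∑ k ∈ Finset.range N', Ms k :=
          Finset.single_le_sum (fun k _ => (hMs k).le) (Finset.mem_range.mpr hn)
        linarith
      have := hMsbd n ⟨β, hβ⟩
      calc tailI P (X n β) M ≤ tailI P (X n β) (Ms n) := tailI_mono P hfm hfi hle
        _ ≤ ε := this
  · -- backward: doubly-indexed UI ⟹ expectation convergence
    intro hUI δ hδ
    obtain ⟨M₁, hM₁, hM₁bd⟩ := hUI (δ / 4) (by linarith)
    obtain ⟨M₂, hM₂, hM₂bd⟩ := h2 (δ / 4) (by linarith)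
    set M := max M₁ M₂ with hMdef
    have hM : 0 < M := lt_of_lt_of_le hM₁ (le_max_left _ _)
    obtain ⟨N, hN⟩ := h3 (δ / 4) (by linarith) (δ / (8 * M)) (by positivity)
    refine ⟨N, fun n hn β hβ => ?_⟩
    have hfm := hXmeas n β hβ
    have hgm := hXlimmeas β hβ
    have hfi := hXint n β hβ
    have hgi := hXlimint β hβ
    have hkey := key1 P hfm hgm hfi hgi (δ / 4) M (by linarith) hM
    have htf : tailI P (X n β) M ≤ δ / 4 := by
      have := hM₁bd (n, ⟨β, hβ⟩)
      calc tailI P (X n β) M ≤ tailI P (X n β) M₁ :=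
            tailI_mono P hfm hfi (le_max_left _ _)
        _ ≤ δ / 4 := this
    have htg : tailI P (Xlim β) M ≤ δ / 4 := by
      have := hM₂bd ⟨β, hβ⟩
      calc tailI P (Xlim β) M ≤ tailI P (Xlim β) M₂ :=
            tailI_mono P hgm hgi (le_max_right _ _)
        _ ≤ δ / 4 := this
    have hPA : (P {ω | δ / 4 < |X n β ω - Xlim β ω|}).toReal ≤ δ / (8 * M) :=
      hN n hn β hβ
    have h2M : 2 * M * (P {ω | δ / 4 < |X n β ω - Xlim β ω|}).toReal ≤ δ / 4 := by
      have := mul_le_mul_of_nonneg_left hPA (by positivity : (0:ℝ) ≤ 2 * M)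
      have heq : 2 * M * (δ / (8 * M)) = δ / 4 := by field_simp; ring
      linarith [heq ▸ this]
    linarith
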